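/- Let h be an m×n ROCN matrix (m ≤ n), and define β_C^h = max over a ∈ {−1,1}^m of Σ_{j=1}^n |Σ_{i=1}^m h_{ij} a_i|. Then β_C^h ≤ n, and β_C^h = n if and only if there exists a ∈ {−1,1}^m such that Σ_{1 ≤ i < k ≤ m} h_{ij} h_{kj} a_i a_k = 0 for every j ∈ {1,…,n}. In particular, the ROCN Bell inequality exhibits a quantum advantage (β_C^h < β_Q^h = n) exactly when no such sign vector a exists. -/
import Mathlib


open Finset

/-- An `m × n` real matrix `h` (with `m ≤ n`) is ROCN (row-orthogonal, column-normalized)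
if all its rows are nonzero, its rows are pairwise orthogonal, and every column has
unit Euclidean norm. -/
def IsROCN {m n : ℕ} (h : Matrix (Fin m) (Fin n) ℝ) : Prop :=
  m ≤ n ∧
  (∀ i, ∃ j, h i j ≠ 0) ∧
  (∀ i k, i ≠ k → ∑ j, h i j * h k j = 0) ∧
  (∀ j, ∑ i, (h i j) ^ 2 = 1)

/-- The classical bound `β_C^h = max_{a ∈ {±1}^m} Σⱼ |Σᵢ hᵢⱼ aᵢ|` of the correlation
Bell functional determined by `h`. -/
noncomputable def betaC {m n : ℕ} (h : Matrix (Fin m) (Fin n) ℝ) : ℝ :=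
  sSup {x : ℝ | ∃ a : Fin m → ℝ, (∀ i, a i = 1 ∨ a i = -1) ∧
    x = ∑ j, |∑ i, h i j * a i|}

/-- Expansion of the square of a sum into diagonal and strictly upper-triangular parts. -/
lemma sq_sum_expand {m : ℕ} (f : Fin m → ℝ) :
    (∑ i, f i) ^ 2 = ∑ i, f i ^ 2 + 2 * ∑ i, ∑ k, (if i < k then f i * f k else 0) := by
  have h1 : (∑ i, f i) ^ 2 = ∑ i, ∑ k, f i * f k := by
    rw [sq, Finset.sum_mul_sum]
  have h2 : ∀ i k : Fin m, f i * f k =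
      (if i < k then f i * f k else 0) + (if k < i then f i * f k else 0)
        + (if i = k then f i * f k else 0) := by
    intro i k
    rcases lt_trichotomy i k with hlt | heq | hgt
    · simp [hlt, not_lt.2 hlt.le, hlt.ne]
    · simp [heq]
    · simp [hgt, not_lt.2 hgt.le, hgt.ne']
  rw [h1]
  have h3 : (∑ i, ∑ k, f i * f k) = ∑ i, ∑ k, ((if i < k then f i * f k else 0)
      + (if k < i then f i * f k else 0) + (if i = k then f i * f k else 0)) :=
    Finset.sum_congr rfl fun i _ => Finset.sum_congr rfl fun k _ => h2 i k
  rw [h3]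
  simp_rw [Finset.sum_add_distrib]
  have hswap : (∑ i, ∑ k, (if k < i then f i * f k else 0))
      = ∑ i, ∑ k, (if i < k then f i * f k else 0) := by
    rw [Finset.sum_comm]
    refine Finset.sum_congr rfl fun i _ => Finset.sum_congr rfl fun k _ => ?_
    rcases eq_or_ne i k with rfl | _
    · simp
    · by_cases hik : i < k <;> simp [hik, mul_comm]
  have hdiag : (∑ i, ∑ k : Fin m, (if i = k then f i * f k else 0)) = ∑ i, f i ^ 2 := by
    refine Finset.sum_congr rfl fun i _ => ?_
    simp [Finset.sum_ite_eq, sq]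
  rw [hswap, hdiag]; ring

/-- For an ROCN matrix `h`: `β_C^h ≤ n`; `β_C^h = n` iff there is a sign
vector `a ∈ {±1}^m` with `Σ_{i<k} hᵢⱼ hₖⱼ aᵢ aₖ = 0` for every column `j`; and there is a
quantum advantage `β_C^h < n = β_Q^h` exactly when no such sign vector exists. -/
theorem rocn_classical_bound {m n : ℕ}
    (h : Matrix (Fin m) (Fin n) ℝ) (hROCN : IsROCN h) :
    betaC h ≤ n ∧
    (betaC h = n ↔ ∃ a : Fin m → ℝ, (∀ i, a i = 1 ∨ a i = -1) ∧
      ∀ j, ∑ i, ∑ k, (if i < k then h i j * h k j * a i * a k else 0) = 0) ∧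
    (betaC h < n ↔ ¬ ∃ a : Fin m → ℝ, (∀ i, a i = 1 ∨ a i = -1) ∧
      ∀ j, ∑ i, ∑ k, (if i < k then h i j * h k j * a i * a k else 0) = 0) := by
  obtain ⟨_, _, horth, hcol⟩ := hROCN
  -- notation
  set S : Set ℝ := {x : ℝ | ∃ a : Fin m → ℝ, (∀ i, a i = 1 ∨ a i = -1) ∧
    x = ∑ j, |∑ i, h i j * a i|} with hS
  -- squares of signs
  have hsq : ∀ (a : Fin m → ℝ), (∀ i, a i = 1 ∨ a i = -1) → ∀ i, a i ^ 2 = 1 := by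
    intro a ha i; rcases ha i with h1 | h1 <;> rw [h1] <;> norm_num
  -- cross term equals ite expression; per-column square identity
  have hcolsq : ∀ (a : Fin m → ℝ), (∀ i, a i = 1 ∨ a i = -1) → ∀ j,
      (∑ i, h i j * a i) ^ 2 =
        1 + 2 * ∑ i, ∑ k, (if i < k then h i j * h k j * a i * a k else 0) := by
    intro a ha j
    have := sq_sum_expand (fun i => h i j * a i)
    have hdiag : (∑ i, (h i j * a i) ^ 2) = 1 := by
      have : ∀ i, (h i j * a i) ^ 2 = h i j ^ 2 := by
        intro i; rw [mul_pow, hsq a ha i, mul_one]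
      rw [Finset.sum_congr rfl fun i _ => this i, hcol j]
    have hcross : (∑ i, ∑ k, (if i < k then (h i j * a i) * (h k j * a k) else 0))
        = ∑ i, ∑ k, (if i < k then h i j * h k j * a i * a k else 0) := by
      refine Finset.sum_congr rfl fun i _ => Finset.sum_congr rfl fun k _ => ?_
      by_cases hik : i < k <;> simp [hik] <;> ring
    rw [this, hdiag, hcross]
  -- sum over columns of squares is n
  have hsumsq : ∀ (a : Fin m → ℝ), (∀ i, a i = 1 ∨ a i = -1) →
      (∑ j, (∑ i, h i j * a i) ^ 2) = n := by
    intro a ha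
    have hzero : (∑ j, ∑ i, ∑ k, (if i < k then h i j * h k j * a i * a k else 0)) = 0 := by
      rw [Finset.sum_comm]
      refine Finset.sum_eq_zero fun i _ => ?_
      rw [Finset.sum_comm]
      refine Finset.sum_eq_zero fun k _ => ?_
      by_cases hik : i < k
      · simp only [hik, if_true]
        calc (∑ j, h i j * h k j * a i * a k)
            = (∑ j, h i j * h k j) * a i * a k := by
              rw [Finset.sum_mul, Finset.sum_mul]
          _ = 0 := by rw [horth i k hik.ne, zero_mul, zero_mul]
      · simp [hik]
    calc (∑ j, (∑ i, h i j * a i) ^ 2)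
        = ∑ j, (1 + 2 * ∑ i, ∑ k, (if i < k then h i j * h k j * a i * a k else 0)) := by
          exact Finset.sum_congr rfl fun j _ => hcolsq a ha j
      _ = (n : ℝ) + 2 * ∑ j, ∑ i, ∑ k, (if i < k then h i j * h k j * a i * a k else 0) := by
          rw [Finset.sum_add_distrib, ← Finset.mul_sum]; simp
      _ = n := by rw [hzero]; ring
  -- every element of S is ≤ n
  have hle : ∀ x ∈ S, x ≤ (n : ℝ) := by
    rintro x ⟨a, ha, rfl⟩
    have hcs := sq_sum_le_card_mul_sum_sq (s := (Finset.univ : Finset (Fin n)))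
      (f := fun j => |∑ i, h i j * a i|)
    simp only [Finset.card_univ, Fintype.card_fin, sq_abs] at hcs
    rw [hsumsq a ha] at hcs
    have hnn : (0 : ℝ) ≤ ∑ j, |∑ i, h i j * a i| :=
      Finset.sum_nonneg fun j _ => abs_nonneg _
    nlinarith [hcs, hnn, Nat.cast_nonneg (α := ℝ) n]
  -- S nonempty
  have hne : S.Nonempty := by
    refine ⟨∑ j, |∑ i, h i j * (1 : ℝ)|, fun _ => 1, fun i => Or.inl rfl, rfl⟩
  have hbdd : BddAbove S := ⟨n, fun x hx => hle x hx⟩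
  -- S is finite
  have hfin : S.Finite := by
    have : S ⊆ (fun a : Fin m → ℝ => ∑ j, |∑ i, h i j * a i|) ''
        (Set.univ.pi fun _ : Fin m => ({1, -1} : Set ℝ)) := by
      rintro x ⟨a, ha, rfl⟩
      exact ⟨a, fun i _ => ha i, rfl⟩
    exact Set.Finite.subset (Set.Finite.image _ (Set.Finite.pi fun _ =>
      (Set.finite_singleton _).insert _)) this
  have hsup_le : betaC h ≤ n := Real.sSup_le hle (Nat.cast_nonneg n)
  -- equality characterization
  have hiff : betaC h = n ↔ ∃ a : Fin m → ℝ, (∀ i, a i = 1 ∨ a i = -1) ∧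
      ∀ j, ∑ i, ∑ k, (if i < k then h i j * h k j * a i * a k else 0) = 0 := by
    constructor
    · intro heq
      have hmem : sSup S ∈ S := hne.csSup_mem hfin
      obtain ⟨a, ha, hx⟩ := hmem
      refine ⟨a, ha, fun j => ?_⟩
      -- ∑ |S_j| = n
      have habs : (∑ j, |∑ i, h i j * a i|) = n := by
        rw [← hx]; exact heq
      have hsq2 := hsumsq a ha
      -- sum of (|S_j| - 1)^2 = 0
      have hzero : (∑ j, (|∑ i, h i j * a i| - 1) ^ 2) = 0 := by
        have expand : (∑ j, (|∑ i, h i j * a i| - 1) ^ 2)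
            = (∑ j, (∑ i, h i j * a i) ^ 2) - 2 * (∑ j, |∑ i, h i j * a i|) + n := by
          simp_rw [sub_sq, one_pow, mul_one, sq_abs]
          rw [Finset.sum_add_distrib, Finset.sum_sub_distrib, ← Finset.mul_sum]
          simp
        rw [expand, habs, hsq2]; ring
      have heach : ∀ j : Fin n, (|∑ i, h i j * a i| - 1) ^ 2 = 0 := by
        intro j
        have := (Finset.sum_eq_zero_iff_of_nonneg
          (fun j _ => sq_nonneg (|∑ i, h i j * a i| - 1))).mp hzero
        exact this j (Finset.mem_univ j)
      have habs1 : |∑ i, h i j * a i| = 1 := by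
        have := heach j; nlinarith [this]
      have hsq1 : (∑ i, h i j * a i) ^ 2 = 1 := by
        rw [← sq_abs, habs1]; norm_num
      have := hcolsq a ha j
      rw [hsq1] at this
      linarith
    · rintro ⟨a, ha, hcross⟩
      have habs1 : ∀ j : Fin n, |∑ i, h i j * a i| = 1 := by
        intro j
        have h1 := hcolsq a ha j
        rw [hcross j] at h1
        have h2 : (∑ i, h i j * a i) ^ 2 = 1 := by linarith
        have h3 : |∑ i, h i j * a i| ^ 2 = 1 := by rw [sq_abs]; exact h2
        nlinarith [abs_nonneg (∑ i, h i j * a i), h3]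
      have hval : (∑ j, |∑ i, h i j * a i|) = n := by
        rw [Finset.sum_congr rfl fun j _ => habs1 j]; simp
      have hmem : (n : ℝ) ∈ S := ⟨a, ha, hval.symm⟩
      exact le_antisymm hsup_le (le_csSup hbdd hmem)
  refine ⟨hsup_le, hiff, ?_⟩
  rw [← hiff]
  constructor
  · exact fun hlt => hlt.ne
  · exact fun hne' => lt_of_le_of_ne hsup_le hne'
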